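/- arXiv:2512.20057 — 2 statements merged into one kernel-verified Lean document; each statement's English description precedes it below -/
import Mathlib

section
/- Let H_U and H_V be Hilbert spaces, and let S_U, S_U' be closed subspaces of H_U and S_V, S_V' be closed subspaces of H_V. Then the intersection of the tensor product subspaces satisfies (S_U ⊗ S_V) ∩ (S_U' ⊗ S_V') = (S_U ∩ S_U') ⊗ (S_V ∩ S_V'), where S ⊗ T denotes the closed subspace of H_U ⊗ H_V generated by elementary tensors f ⊗ g with f ∈ S, g ∈ T. -/
open scoped RealInnerProductSpace

/-- The tensor product of two subspaces: the closure of the span of elementary tensors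
`tp f g` with `f ∈ S`, `g ∈ T`, inside the Hilbert tensor product `W`. -/
noncomputable def tensorSubspace {U V W : Type*}
    [NormedAddCommGroup U] [InnerProductSpace ℝ U]
    [NormedAddCommGroup V] [InnerProductSpace ℝ V]
    [NormedAddCommGroup W] [InnerProductSpace ℝ W]
    (tp : U →ₗ[ℝ] V →ₗ[ℝ] W) (S : Submodule ℝ U) (T : Submodule ℝ V) : Submodule ℝ W :=
  (Submodule.span ℝ {w : W | ∃ f ∈ S, ∃ g ∈ T, w = tp f g}).topologicalClosure

section Aux

variable {U V W : Type*}
    [NormedAddCommGroup U] [InnerProductSpace ℝ U]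
    [NormedAddCommGroup V] [InnerProductSpace ℝ V]
    [NormedAddCommGroup W] [InnerProductSpace ℝ W]
    (tp : U →ₗ[ℝ] V →ₗ[ℝ] W)

/-- Shorthand for the "isometric tensor" hypothesis. -/
def IsTP : Prop :=
  ∀ (f₁ : U) (g₁ : V) (f₂ : U) (g₂ : V),
      ⟪tp f₁ g₁, tp f₂ g₂⟫ = ⟪f₁, f₂⟫ * ⟪g₁, g₂⟫

variable {tp}

theorem IsTP.flip (htp : IsTP tp) : IsTP tp.flip := by
  intro g₁ f₁ g₂ f₂
  rw [LinearMap.flip_apply, LinearMap.flip_apply, htp, mul_comm]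

theorem IsTP.norm_tp (htp : IsTP tp) (f : U) (g : V) : ‖tp f g‖ = ‖f‖ * ‖g‖ := by
  have h := htp f g f g
  rw [real_inner_self_eq_norm_sq, real_inner_self_eq_norm_sq, real_inner_self_eq_norm_sq] at h
  have h' : ‖tp f g‖ ^ 2 = (‖f‖ * ‖g‖) ^ 2 := by rw [h]; ring
  have h1 : (0:ℝ) ≤ ‖tp f g‖ := norm_nonneg _
  have h2 : (0:ℝ) ≤ ‖f‖ * ‖g‖ := by positivity
  nlinarith

variable (tp) in
theorem tensorSubspace_mono {S S' : Submodule ℝ U} {T T' : Submodule ℝ V}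
    (hS : S ≤ S') (hT : T ≤ T') : tensorSubspace tp S T ≤ tensorSubspace tp S' T' := by
  apply Submodule.topologicalClosure_mono
  apply Submodule.span_mono
  rintro w ⟨f, hf, g, hg, rfl⟩
  exact ⟨f, hS hf, g, hT hg, rfl⟩

variable (tp) in
theorem tensorSubspace_flip (S : Submodule ℝ U) (T : Submodule ℝ V) :
    tensorSubspace tp S T = tensorSubspace tp.flip T S := by
  unfold tensorSubspace
  congr 1
  apply congrArg
  ext w
  constructor
  · rintro ⟨f, hf, g, hg, rfl⟩; exact ⟨g, hg, f, hf, rfl⟩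
  · rintro ⟨g, hg, f, hf, rfl⟩; exact ⟨f, hf, g, hg, rfl⟩

variable [CompleteSpace V] [CompleteSpace W]

/-- `tp a` as a continuous linear map. -/
noncomputable def tpCLM (htp : IsTP tp) (a : U) : V →L[ℝ] W :=
  LinearMap.mkContinuous (tp a) ‖a‖ fun g => le_of_eq (htp.norm_tp a g)

@[simp] theorem tpCLM_apply (htp : IsTP tp) (a : U) (g : V) :
    tpCLM htp a g = tp a g := rfl

/-- The slice operator: adjoint of `tp a : V → W`. -/
noncomputable def tauCLM (htp : IsTP tp) (a : U) : W →L[ℝ] V :=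
  ContinuousLinearMap.adjoint (tpCLM htp a)

theorem tauCLM_inner (htp : IsTP tp) (a : U) (w : W) (g : V) :
    ⟪tauCLM htp a w, g⟫ = ⟪w, tp a g⟫ :=
  ContinuousLinearMap.adjoint_inner_left (tpCLM htp a) g w

theorem tauCLM_tp (htp : IsTP tp) (a f : U) (g : V) :
    tauCLM htp a (tp f g) = ⟪f, a⟫ • g := by
  apply ext_inner_right ℝ
  intro g'
  rw [tauCLM_inner, htp, real_inner_smul_left]

theorem tauCLM_add_left (htp : IsTP tp) (a a' : U) (w : W) :
    tauCLM htp (a + a') w = tauCLM htp a w + tauCLM htp a' w := by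
  apply ext_inner_right ℝ
  intro g
  rw [inner_add_left, tauCLM_inner, tauCLM_inner, tauCLM_inner, map_add,
    LinearMap.add_apply, inner_add_right]

theorem tauCLM_smul_left (htp : IsTP tp) (r : ℝ) (a : U) (w : W) :
    tauCLM htp (r • a) w = r • tauCLM htp a w := by
  apply ext_inner_right ℝ
  intro g
  rw [real_inner_smul_left, tauCLM_inner, tauCLM_inner, map_smul,
    LinearMap.smul_apply, real_inner_smul_right]

theorem tauCLM_norm_le (htp : IsTP tp) (a : U) (w : W) :
    ‖tauCLM htp a w‖ ≤ ‖w‖ * ‖a‖ := by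
  have h1 : ‖tauCLM htp a‖ = ‖tpCLM htp a‖ :=
    ContinuousLinearMap.adjoint.norm_map (tpCLM htp a)
  have h2 : ‖tpCLM htp a‖ ≤ ‖a‖ :=
    LinearMap.mkContinuous_norm_le _ (norm_nonneg a) _
  calc ‖tauCLM htp a w‖ ≤ ‖tauCLM htp a‖ * ‖w‖ := (tauCLM htp a).le_opNorm w
  _ ≤ ‖a‖ * ‖w‖ := by rw [h1]; exact mul_le_mul_of_nonneg_right h2 (norm_nonneg w)
  _ = ‖w‖ * ‖a‖ := mul_comm _ _

/-- The slice operator, as a continuous linear map in the first variable. -/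
noncomputable def tauFlip (htp : IsTP tp) (w : W) : U →L[ℝ] V :=
  LinearMap.mkContinuous
    { toFun := fun a => tauCLM htp a w
      map_add' := fun a a' => tauCLM_add_left htp a a' w
      map_smul' := fun r a => tauCLM_smul_left htp r a w } ‖w‖
    (fun a => tauCLM_norm_le htp a w)

@[simp] theorem tauFlip_apply (htp : IsTP tp) (w : W) (a : U) :
    tauFlip htp w a = tauCLM htp a w := rfl

/-- Slices of elements of `S ⊗ T` lie in `T`. -/
theorem tau_mem (htp : IsTP tp) {S : Submodule ℝ U} {T : Submodule ℝ V}
    (hT : IsClosed (T : Set V)) {w : W} (hw : w ∈ tensorSubspace tp S T) (a : U) :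
    tauCLM htp a w ∈ T := by
  have hle : tensorSubspace tp S T ≤ T.comap ((tauCLM htp a) : W →ₗ[ℝ] V) := by
    apply Submodule.topologicalClosure_minimal
    · rw [Submodule.span_le]
      rintro x ⟨f, hf, g, hg, rfl⟩
      simp only [SetLike.mem_coe, Submodule.mem_comap, ContinuousLinearMap.coe_coe]
      rw [tauCLM_tp]
      exact T.smul_mem _ hg
    · exact hT.preimage (tauCLM htp a).continuous
  exact hle hw

theorem hasSum_mem_tensorSubspace {ι : Type*} {v : ι → W} {x : W} (hv : HasSum v x)
    {S : Submodule ℝ U} {T : Submodule ℝ V}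
    (h : ∀ i, ∃ f ∈ S, ∃ g ∈ T, v i = tp f g) :
    x ∈ tensorSubspace tp S T := by
  refine (Submodule.isClosed_topologicalClosure _).mem_of_tendsto hv
    (Filter.Eventually.of_forall fun F => ?_)
  refine Submodule.sum_mem _ fun i _ => ?_
  exact Submodule.le_topologicalClosure _ (Submodule.subset_span (h i))

/-- The expansion lemma: an element of `C ⊗ ⊤` is the sum of its slices along a
Hilbert basis of `C`. -/
theorem hasSum_expansion [CompleteSpace U] {J : Type*} (htp : IsTP tp) {C : Submodule ℝ U}
    (hC : IsClosed (C : Set U)) (b : HilbertBasis J ℝ ↥C) {w : W}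
    (hw : w ∈ tensorSubspace tp C ⊤) :
    HasSum (fun j => tp ((b j : ↥C) : U) (tauCLM htp ((b j : ↥C) : U) w)) w := by
  haveI : CompleteSpace ↥C := hC.completeSpace_coe
  set τ : J → V := fun j => tauCLM htp ((b j : ↥C) : U) w with hτ
  have hnorm1 : ∀ j, ‖((b j : ↥C) : U)‖ = 1 := fun j => b.orthonormal.1 j
  let E : J → (V →ₗᵢ[ℝ] W) := fun j =>
    { toLinearMap := tp ((b j : ↥C) : U)
      norm_map' := fun g => by
        show ‖tp ((b j : ↥C) : U) g‖ = ‖g‖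
        rw [htp.norm_tp, hnorm1, one_mul] }
  have hEapp : ∀ j (g : V), E j g = tp ((b j : ↥C) : U) g := fun j g => rfl
  have hE : OrthogonalFamily ℝ (fun _ => V) E := by
    intro j k hjk x y
    rw [hEapp, hEapp, htp]
    have h0 : ⟪((b j : ↥C) : U), ((b k : ↥C) : U)⟫ = 0 := b.orthonormal.2 hjk
    rw [h0, zero_mul]
  have hwv : ∀ j, ⟪w, tp ((b j : ↥C) : U) (τ j)⟫ = ‖τ j‖ ^ 2 := fun j => by
    rw [← tauCLM_inner htp]
    exact real_inner_self_eq_norm_sq (τ j)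
  have hbound : ∀ F : Finset J, ∑ j ∈ F, ‖τ j‖ ^ 2 ≤ ‖w‖ ^ 2 := by
    intro F
    set s := ∑ j ∈ F, E j (τ j) with hs
    have h1 : ‖s‖ ^ 2 = ∑ j ∈ F, ‖τ j‖ ^ 2 := hE.norm_sum τ F
    have h2 : ⟪w, s⟫ = ∑ j ∈ F, ‖τ j‖ ^ 2 := by
      rw [hs, inner_sum]
      exact Finset.sum_congr rfl fun j _ => hwv j
    have h3 : ⟪w, s⟫ ≤ ‖w‖ * ‖s‖ := real_inner_le_norm w s
    nlinarith [norm_nonneg s, norm_nonneg w, sq_nonneg (‖w‖ - ‖s‖)]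
  have hsummable : Summable (fun j => E j (τ j)) := by
    rw [hE.summable_iff_norm_sq_summable]
    exact summable_of_sum_le (fun j => sq_nonneg _) hbound
  obtain ⟨s, hs⟩ := hsummable
  have hsK : s ∈ tensorSubspace tp C ⊤ :=
    hasSum_mem_tensorSubspace hs fun j =>
      ⟨((b j : ↥C) : U), (b j : ↥C).2, τ j, Submodule.mem_top, rfl⟩
  -- the two sides agree against all generators
  have hgen : ∀ f ∈ C, ∀ g : V, ⟪w - s, tp f g⟫ = 0 := by
    intro f hf g
    have h1 : HasSum (fun j => ⟪tp f g, E j (τ j)⟫) ⟪tp f g, s⟫ :=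
      hs.mapL (innerSL ℝ (tp f g))
    -- the other expansion
    set c : ↥C := ⟨f, hf⟩ with hc
    set Φ : ↥C →L[ℝ] ℝ :=
      (innerSL ℝ g).comp ((tauFlip htp w).comp (C.subtypeL)) with hΦ
    have h2 : HasSum (fun j => b.repr c j • Φ (b j)) (Φ c) := by
      have := (b.hasSum_repr c).mapL Φ
      simpa only [map_smul, smul_eq_mul] using this
    have hterm : ∀ j, ⟪tp f g, E j (τ j)⟫ = b.repr c j • Φ (b j) := by
      intro j
      rw [hEapp, htp, b.repr_apply_apply]
      show ⟪f, ((b j : ↥C) : U)⟫ * ⟪g, tauCLM htp ((b j : ↥C) : U) w⟫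
        = ⟪((b j : ↥C) : U), f⟫ * ⟪g, tauCLM htp ((b j : ↥C) : U) w⟫
      rw [← real_inner_comm f]
    have h1' : HasSum (fun j => b.repr c j • Φ (b j)) ⟪tp f g, s⟫ := by
      simpa only [hterm] using h1
    have heq : ⟪tp f g, s⟫ = Φ c := h1'.unique h2
    have hΦc : Φ c = ⟪tp f g, w⟫ := by
      show ⟪g, tauCLM htp f w⟫ = ⟪tp f g, w⟫
      rw [real_inner_comm, tauCLM_inner htp]
      exact real_inner_comm _ _
    have e1 : ⟪w, tp f g⟫ = ⟪tp f g, w⟫ := real_inner_comm _ _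
    have e2 : ⟪s, tp f g⟫ = ⟪tp f g, s⟫ := real_inner_comm _ _
    rw [inner_sub_left, e1, e2, heq, hΦc, sub_self]
  have hperp : tensorSubspace tp C ⊤ ≤
      LinearMap.ker ((innerSL ℝ (w - s)) : W →ₗ[ℝ] ℝ) := by
    apply Submodule.topologicalClosure_minimal
    · rw [Submodule.span_le]
      rintro x ⟨f, hf, g, -, rfl⟩
      simp only [SetLike.mem_coe, LinearMap.mem_ker, ContinuousLinearMap.coe_coe,
        innerSL_apply_apply]
      exact hgen f hf g
    · exact ContinuousLinearMap.isClosed_ker (innerSL ℝ (w - s))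
  have hzero : w - s = 0 := by
    have hmem := Submodule.sub_mem _ hw hsK
    have h := hperp hmem
    rw [LinearMap.mem_ker] at h
    simp only [ContinuousLinearMap.coe_coe, innerSL_apply_apply] at h
    exact inner_self_eq_zero.mp h
  have hws : w = s := sub_eq_zero.mp hzero
  have hs' : HasSum (fun j => E j (τ j)) w := by rw [hws]; exact hs
  exact hs'

end Aux

/-- Proposition (intersection of Tucker-form tensor subspaces):
`(S_U ⊗ S_V) ⊓ (S_U' ⊗ S_V') = (S_U ⊓ S_U') ⊗ (S_V ⊓ S_V')`. -/
theorem tensor_subspace_inter {U V W : Type*}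
    [NormedAddCommGroup U] [InnerProductSpace ℝ U] [CompleteSpace U]
    [NormedAddCommGroup V] [InnerProductSpace ℝ V] [CompleteSpace V]
    [NormedAddCommGroup W] [InnerProductSpace ℝ W] [CompleteSpace W]
    (tp : U →ₗ[ℝ] V →ₗ[ℝ] W)
    (htp : ∀ (f₁ : U) (g₁ : V) (f₂ : U) (g₂ : V),
      ⟪tp f₁ g₁, tp f₂ g₂⟫ = ⟪f₁, f₂⟫ * ⟪g₁, g₂⟫)
    (SU SU' : Submodule ℝ U) (SV SV' : Submodule ℝ V)
    (hSU : IsClosed (SU : Set U)) (hSU' : IsClosed (SU' : Set U))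
    (hSV : IsClosed (SV : Set V)) (hSV' : IsClosed (SV' : Set V)) :
    tensorSubspace tp SU SV ⊓ tensorSubspace tp SU' SV'
      = tensorSubspace tp (SU ⊓ SU') (SV ⊓ SV') := by
  have htp' : IsTP tp := htp
  have htpf : IsTP tp.flip := htp'.flip
  apply le_antisymm
  · -- the hard direction
    intro w hw
    obtain ⟨hw1, hw2⟩ := Submodule.mem_inf.mp hw
    -- slices in the first coordinate lie in SU ⊓ SU'
    have hσ : ∀ a : V, tauCLM htpf a w ∈ SU ⊓ SU' := by
      intro a
      refine Submodule.mem_inf.mpr ⟨?_, ?_⟩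
      · exact tau_mem htpf hSU (by rw [← tensorSubspace_flip]; exact hw1) a
      · exact tau_mem htpf hSU' (by rw [← tensorSubspace_flip]; exact hw2) a
    -- slices in the second coordinate lie in SV ⊓ SV'
    have hτ : ∀ a : U, tauCLM htp' a w ∈ SV ⊓ SV' := by
      intro a
      refine Submodule.mem_inf.mpr ⟨?_, ?_⟩
      · exact tau_mem htp' hSV hw1 a
      · exact tau_mem htp' hSV' hw2 a
    -- Step 1 : w ∈ (SU ⊓ SU') ⊗ ⊤
    have hwtop : w ∈ tensorSubspace tp.flip ⊤ ⊤ := by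
      rw [← tensorSubspace_flip]
      exact tensorSubspace_mono tp le_top le_top hw1
    have htopclosed : IsClosed ((⊤ : Submodule ℝ V) : Set V) := by
      rw [Submodule.top_coe]; exact isClosed_univ
    haveI : CompleteSpace ↥(⊤ : Submodule ℝ V) := htopclosed.completeSpace_coe
    obtain ⟨JV, bV, -⟩ := exists_hilbertBasis ℝ ↥(⊤ : Submodule ℝ V)
    have hexp1 := hasSum_expansion htpf htopclosed bV hwtop
    have hw1' : w ∈ tensorSubspace tp (SU ⊓ SU') ⊤ := by
      refine hasSum_mem_tensorSubspace hexp1 fun i => ?_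
      exact ⟨tauCLM htpf ((bV i : ↥(⊤ : Submodule ℝ V)) : V) w,
        hσ _, ((bV i : ↥(⊤ : Submodule ℝ V)) : V), Submodule.mem_top, rfl⟩
    -- Step 2 : expand along a Hilbert basis of SU ⊓ SU'
    have hinfclosed : IsClosed ((SU ⊓ SU' : Submodule ℝ U) : Set U) := by
      rw [Submodule.coe_inf]; exact hSU.inter hSU'
    haveI : CompleteSpace ↥(SU ⊓ SU') := hinfclosed.completeSpace_coe
    obtain ⟨JU, bU, -⟩ := exists_hilbertBasis ℝ ↥(SU ⊓ SU')
    have hexp2 := hasSum_expansion htp' hinfclosed bU hw1'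
    refine hasSum_mem_tensorSubspace hexp2 fun j => ?_
    exact ⟨((bU j : ↥(SU ⊓ SU')) : U), (bU j : ↥(SU ⊓ SU')).2,
      tauCLM htp' ((bU j : ↥(SU ⊓ SU')) : U) w, hτ _, rfl⟩
  · exact le_inf (tensorSubspace_mono tp inf_le_left inf_le_left)
      (tensorSubspace_mono tp inf_le_right inf_le_right)
end

section
/- Let P ∈ ℝ^{m×m} be a symmetric idempotent (projection) matrix, let K ∈ ℝ^{m×m} be symmetric positive definite, and set G = P K P. Then the column space of G equals the column space of P, and consequently G G† = P, where G† is the Moore–Penrose pseudoinverse of G. -/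
open Matrix

/-- `B` is the Moore–Penrose pseudoinverse of `A` (Penrose conditions). -/
def IsMoorePenroseInv {m : Type*} [Fintype m] [DecidableEq m]
    (A B : Matrix m m ℝ) : Prop :=
  A * B * A = A ∧ B * A * B = B ∧ (A * B).IsSymm ∧ (B * A).IsSymm

/-- If `P` is a symmetric idempotent (projection) matrix, `K` is symmetric positive definite,
and `G = P K P`, then the column space of `G` equals the column space of `P`, and consequently
`G G† = P`. -/
theorem colspace_PKP_and_GGdag_eq_P {m : ℕ}
    (P K G B : Matrix (Fin m) (Fin m) ℝ)
    (hPsymm : P.IsSymm) (hPidem : P * P = P)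
    (hK : K.PosDef)
    (hG : G = P * K * P)
    (hB : IsMoorePenroseInv G B) :
    LinearMap.range G.mulVecLin = LinearMap.range P.mulVecLin ∧ G * B = P := by
  obtain ⟨hGBG, hBGB, hGBs, hBGs⟩ := hB
  have hPG : P * G = G := by rw [hG, ← Matrix.mul_assoc, ← Matrix.mul_assoc, hPidem]
  have hGP : G * P = G := by rw [hG, Matrix.mul_assoc, Matrix.mul_assoc, hPidem, Matrix.mul_assoc]
  have hGsymm : Gᵀ = G := by
    rw [hG, Matrix.transpose_mul, Matrix.transpose_mul, hPsymm.eq,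
      ← Matrix.conjTranspose_eq_transpose_of_trivial, hK.1.eq, Matrix.mul_assoc]
  -- ker G ⊆ ker P
  have hker : ∀ x : Fin m → ℝ, G.mulVec x = 0 → P.mulVec x = 0 := by
    intro x hx
    by_contra hPx
    have h1 : (P.mulVec x) ⬝ᵥ K.mulVec (P.mulVec x) > 0 := by
      have := hK.dotProduct_mulVec_pos hPx
      simpa using this
    have hxP : x ᵥ* P = P *ᵥ x := by
      conv_lhs => rw [← hPsymm.eq]
      rw [Matrix.vecMul_transpose]
    have h2 : x ⬝ᵥ G *ᵥ x = (P *ᵥ x) ⬝ᵥ K *ᵥ (P *ᵥ x) := by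
      rw [hG, ← Matrix.mulVec_mulVec, ← Matrix.mulVec_mulVec,
        Matrix.dotProduct_mulVec, hxP]
    rw [hx] at h2
    simp only [dotProduct_zero] at h2
    rw [← h2] at h1
    exact lt_irrefl 0 h1
  -- let M = P - G*B; M is symmetric, PM = M, MG = 0, hence GM = 0, hence M = 0
  have hGBsymm : (G * B)ᵀ = G * B := hGBs.eq
  have hPS : P * (G * B) = G * B := by rw [← Matrix.mul_assoc, hPG]
  have hMsymm : (P - G * B)ᵀ = P - G * B := by
    rw [Matrix.transpose_sub, hGBsymm, hPsymm.eq]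
  have hPM : P * (P - G * B) = P - G * B := by
    rw [Matrix.mul_sub, hPidem, hPS]
  have hMG : (P - G * B) * G = 0 := by
    rw [Matrix.sub_mul, hPG, Matrix.mul_assoc, ← Matrix.mul_assoc, hGBG, sub_self]
  have hGM : G * (P - G * B) = 0 := by
    have h := congrArg Matrix.transpose hMG
    rwa [Matrix.transpose_mul, hMsymm, hGsymm, Matrix.transpose_zero] at h
  have hM : P - G * B = 0 := by
    have hmv : ∀ y : Fin m → ℝ, (P - G * B).mulVec y = 0 := by
      intro y
      have h0 : G.mulVec ((P - G * B).mulVec y) = 0 := by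
        rw [Matrix.mulVec_mulVec, hGM, Matrix.zero_mulVec]
      have := hker _ h0
      rwa [Matrix.mulVec_mulVec, hPM] at this
    ext i j
    have := congrFun (hmv (Pi.single j 1)) i
    simpa [Matrix.mulVec_single] using this
  have hGB : G * B = P := (sub_eq_zero.mp hM).symm
  refine ⟨?_, hGB⟩
  apply le_antisymm
  · rintro v ⟨x, rfl⟩
    refine ⟨(K * P).mulVec x, ?_⟩
    simp only [Matrix.mulVecLin_apply, Matrix.mulVec_mulVec]
    rw [← Matrix.mul_assoc, ← hG]
  · rintro v ⟨x, rfl⟩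
    refine ⟨B.mulVec x, ?_⟩
    simp only [Matrix.mulVecLin_apply, Matrix.mulVec_mulVec, hGB]
end
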